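/- Let G = (V,E) be a finite connected simple graph with |V| = n ≥ 3, and let λ = min{ |∂S| : ∅ ≠ S ⊊ V } ≥ 1 be its edge connectivity. Let k be a real number with 1 ≤ k ≤ λ, let ε ∈ (0,1), let τ ≥ 3 be a real number, and set p = 3τ·ln(n)/(ε²·k); assume p ≤ 1. Suppose that for every positive integer j, the number of distinct edge sets of the form ∂S (with ∅ ≠ S ⊊ V) having cardinality at most j·λ is at most n^{2j}. Consider the random subgraph in which each edge of E is included independently with probability p, and let X(S) denote the number of included edges of ∂S. Then the probability that there exists S with ∅ ≠ S ⊊ V and X(S) ≥ (1+ε)·p·|∂S| is at most n^{5−τ}. Equivalently, with probability at least 1 − n^{5−τ}, every cut ∂S has strictly fewer than (1+ε)p|∂S| sampled edges. -/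

import Mathlib

open MeasureTheory

/-- For a simple graph `G` and a vertex set `S`, `edgeCut G S` is the set of edges of `G`
with exactly one endpoint in `S`. -/
def edgeCut {V : Type*} (G : SimpleGraph V) (S : Set V) : Set (Sym2 V) :=
  {e | e ∈ G.edgeSet ∧ ∃ x ∈ S, ∃ y ∉ S, e = s(x, y)}



section Generic
variable {ι : Type*} [Fintype ι]

omit [Fintype ι] in
lemma msAll' [Finite ι] (s : Set (ι → Bool)) : MeasurableSet s := by
  have h1 : ∀ ω : ι → Bool, MeasurableSet ({ω} : Set (ι → Bool)) := by
    intro ω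
    rw [← Set.univ_pi_singleton]
    exact MeasurableSet.univ_pi fun i => (by trivial : MeasurableSet {ω i})
  have : s = ⋃ ω ∈ s, {ω} := by simp
  rw [this]; exact MeasurableSet.biUnion (Set.to_countable _) fun ω _ => h1 ω

lemma msAll (s : Set (ι → Bool)) : MeasurableSet s := msAll' s

noncomputable def bw (p : ℝ) (b : Bool) : ℝ := if b then p else 1 - p

noncomputable def W (p : ℝ) (ω : ι → Bool) : ℝ := ∏ e, bw p (ω e)

lemma bw_nonneg {p : ℝ} (hp0 : 0 ≤ p) (hp1 : p ≤ 1) (b : Bool) : 0 ≤ bw p b := by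
  cases b <;> simp [bw] <;> linarith

lemma W_nonneg {p : ℝ} (hp0 : 0 ≤ p) (hp1 : p ≤ 1) (ω : ι → Bool) : 0 ≤ W p ω :=
  Finset.prod_nonneg fun e _ => bw_nonneg hp0 hp1 _

lemma bern_singleton {p : ℝ} (hp0 : 0 ≤ p) (hp1 : p ≤ 1) (b : Bool) :
    (PMF.bernoulli (Real.toNNReal p) (Real.toNNReal_le_one.mpr hp1)).toMeasure {b}
      = ENNReal.ofReal (bw p b) := by
  rw [PMF.toMeasure_apply_singleton _ _ (by trivial), PMF.bernoulli_apply]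
  cases b
  · rw [show bw p false = 1 - p from rfl, ENNReal.ofReal_sub _ hp0, ENNReal.ofReal_one]
    simp [ENNReal.ofReal, ENNReal.coe_sub]
  · rfl

lemma mu_singleton {p : ℝ} (hp0 : 0 ≤ p) (hp1 : p ≤ 1) (ω : ι → Bool) :
    (Measure.pi fun _ : ι =>
        (PMF.bernoulli (Real.toNNReal p) (Real.toNNReal_le_one.mpr hp1)).toMeasure) {ω}
      = ENNReal.ofReal (W p ω) := by
  rw [← Set.univ_pi_singleton, Measure.pi_pi]
  rw [W, ENNReal.ofReal_prod_of_nonneg fun e (_ : e ∈ Finset.univ) => bw_nonneg hp0 hp1 (ω e)]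
  exact Finset.prod_congr rfl fun e _ => bern_singleton hp0 hp1 _

end Generic

section Generic2
variable {ι : Type*} [Fintype ι] [DecidableEq ι]

lemma mu_set {p : ℝ} (hp0 : 0 ≤ p) (hp1 : p ≤ 1) (A : Set (ι → Bool)) :
    (Measure.pi fun _ : ι =>
        (PMF.bernoulli (Real.toNNReal p) (Real.toNNReal_le_one.mpr hp1)).toMeasure) A
      = ENNReal.ofReal (∑ ω ∈ A.toFinite.toFinset, W p ω) := by
  classical
  have hA : A = ⋃ ω ∈ A.toFinite.toFinset, {ω} := by
    ext x
    simp only [Set.mem_iUnion, Set.Finite.mem_toFinset, Set.mem_singleton_iff, exists_prop]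
    exact ⟨fun h => ⟨x, h, rfl⟩, fun ⟨y, hy, hxy⟩ => hxy ▸ hy⟩
  conv_lhs => rw [hA]
  rw [measure_biUnion_finset ?_ (fun ω _ => msAll _),
    ENNReal.ofReal_sum_of_nonneg fun ω _ => W_nonneg hp0 hp1 ω]
  · simp only [mu_singleton hp0 hp1]

  · intro a _ b _ hab
    simp [Function.onFun, Set.disjoint_singleton, hab]

noncomputable def X (C : Finset ι) (ω : ι → Bool) : ℕ := (C.filter (fun e => ω e = true)).card

lemma sum_W_exp {p : ℝ} (C : Finset ι) (s : ℝ) :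
    ∑ ω : ι → Bool, W p ω * Real.exp s ^ (X C ω) = (1 - p + p * Real.exp s) ^ C.card := by
  classical
  have h1 : ∀ ω : ι → Bool, W p ω * Real.exp s ^ (X C ω)
      = ∏ e, (bw p (ω e) * (if e ∈ C then (if ω e then Real.exp s else 1) else 1)) := by
    intro ω
    rw [Finset.prod_mul_distrib, ← W]
    congr 1
    rw [X, ← Finset.prod_const (b := Real.exp s)]
    rw [Finset.prod_filter]
    rw [← Finset.prod_subset (Finset.subset_univ C)]
    · exact Finset.prod_congr rfl fun e he => by simp [he]
    · intro e _ he; simp [he]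
  simp_rw [h1]
  have key := Fintype.prod_sum
    (fun (e : ι) (b : Bool) => bw p b * (if e ∈ C then (if b then Real.exp s else 1) else 1))
  rw [← key]
  have h2 : ∀ e : ι, (∑ b : Bool, bw p b * (if e ∈ C then (if b then Real.exp s else 1) else 1))
      = if e ∈ C then (1 - p + p * Real.exp s) else 1 := by
    intro e
    rw [Fintype.sum_bool]
    by_cases he : e ∈ C <;> simp [bw, he] <;> ring
  simp_rw [h2]
  rw [Finset.prod_ite, Finset.prod_const, Finset.prod_const_one, mul_one,
    Finset.filter_mem_eq_inter, Finset.univ_inter]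

end Generic2

section Analytic

lemma log_ge_frac {x : ℝ} (hx : 0 ≤ x) : x / (1 + x) ≤ Real.log (1 + x) := by
  have h1 : (0:ℝ) < 1 + x := by linarith
  rw [Real.le_log_iff_exp_le h1]
  have h2 := Real.add_one_le_exp (-(x / (1 + x)))
  have h3 : -(x/(1+x)) + 1 = 1/(1+x) := by field_simp; ring
  rw [h3] at h2
  have h5 : Real.exp (x/(1+x)) * (1/(1+x))
      ≤ Real.exp (x/(1+x)) * Real.exp (-(x/(1+x))) :=
    mul_le_mul_of_nonneg_left h2 (Real.exp_pos _).le
  rw [← Real.exp_add, add_neg_cancel, Real.exp_zero] at h5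
  rw [show Real.exp (x/(1+x)) * (1/(1+x)) = Real.exp (x/(1+x)) / (1+x) by ring,
    div_le_one h1] at h5
  exact h5

lemma log_twofrac {x : ℝ} (hx : 0 ≤ x) : 2*x ≤ (2+x) * Real.log (1+x) := by
  set f : ℝ → ℝ := fun y => (2+y) * Real.log (1+y) - 2*y with hf
  have hd : ∀ y : ℝ, -1 < y →
      HasDerivAt f (1 * Real.log (1+y) + (2+y) * (1/(1+y)) - 2) y := by
    intro y hy
    have h1 : HasDerivAt (fun z : ℝ => 1 + z) 1 y := (hasDerivAt_id y).const_add 1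
    have hlog : HasDerivAt (fun z : ℝ => Real.log (1+z)) (1/(1+y)) y := by
      have := (Real.hasDerivAt_log (by linarith : (1:ℝ)+y ≠ 0)).comp y h1
      simpa [one_div, Function.comp_def] using this
    have h2 : HasDerivAt (fun z : ℝ => 2 + z) 1 y := (hasDerivAt_id y).const_add 2
    have h3 : HasDerivAt (fun z : ℝ => 2*z) 2 y := by
      simpa using (hasDerivAt_id y).const_mul 2
    exact (h2.mul hlog).sub h3
  have hdiff : ∀ y ∈ Set.Ici (0:ℝ), DifferentiableAt ℝ f y := fun y hy =>
    (hd y (by simp at hy; linarith)).differentiableAt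
  have mono : MonotoneOn f (Set.Ici 0) := by
    apply monotoneOn_of_deriv_nonneg (convex_Ici 0)
      (fun y hy => (hdiff y hy).continuousAt.continuousWithinAt)
      (fun y hy => (hdiff y (interior_subset hy)).differentiableWithinAt)
    intro y hy
    rw [interior_Ici] at hy
    have hy0 : (0:ℝ) < y := hy
    rw [(hd y (by linarith)).deriv]
    have hfr := log_ge_frac hy0.le
    have he : (2+y) * (1/(1+y)) - 2 = -(y/(1+y)) := by field_simp; ring
    have h1y : (0:ℝ) < 1 + y := by linarith
    nlinarith [hfr, h1y]
  have h0 : f 0 ≤ f x := mono (by simp) (by simpa using hx) hx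
  simp only [hf] at h0
  norm_num at h0
  linarith

lemma key_ineq {x : ℝ} (hx0 : 0 ≤ x) (hx1 : x ≤ 1) :
    x + x^2/3 ≤ (1+x) * Real.log (1+x) := by
  have h2 := log_twofrac hx0
  have h1y : (0:ℝ) < 2 + x := by linarith
  have hL : 2*x/(2+x) ≤ Real.log (1+x) := by
    rw [div_le_iff₀ h1y]; linarith [h2]
  have h3 : (1+x) * (2*x/(2+x)) ≤ (1+x) * Real.log (1+x) :=
    mul_le_mul_of_nonneg_left hL (by linarith)
  refine le_trans ?_ h3
  rw [mul_div_assoc', le_div_iff₀ h1y]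
  nlinarith [sq_nonneg x, hx1, hx0]

end Analytic

section Chernoff
variable {ι : Type*} [Fintype ι] [DecidableEq ι]

lemma chernoff {p ε : ℝ} (hp0 : 0 ≤ p) (hp1 : p ≤ 1) (hε0 : 0 < ε) (hε1 : ε < 1)
    (C : Finset ι) :
    (Measure.pi fun _ : ι =>
        (PMF.bernoulli (Real.toNNReal p) (Real.toNNReal_le_one.mpr hp1)).toMeasure)
      {ω : ι → Bool | (1+ε) * p * (C.card : ℝ) ≤ (X C ω : ℝ)}
      ≤ ENNReal.ofReal (Real.exp (-(ε^2 * p * (C.card : ℝ)) / 3)) := by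
  classical
  rw [mu_set hp0 hp1]
  apply ENNReal.ofReal_le_ofReal
  set c := (C.card : ℝ) with hc
  have hc0 : (0:ℝ) ≤ c := Nat.cast_nonneg _
  set t := Real.log (1+ε) with ht
  have h1ε : (0:ℝ) < 1 + ε := by linarith
  have het : Real.exp t = 1 + ε := Real.exp_log h1ε
  have ht0 : 0 ≤ t := Real.log_nonneg (by linarith)
  set a := (1+ε) * p * c with ha
  have ha0 : 0 ≤ a := by
    apply mul_nonneg (mul_nonneg (by linarith) hp0) hc0
  have step1 : ∀ ω ∈ ({ω : ι → Bool | a ≤ (X C ω : ℝ)}).toFinite.toFinset,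
      W p ω ≤ (W p ω * Real.exp t ^ (X C ω)) * Real.exp (-(a*t)) := by
    intro ω hω
    rw [Set.Finite.mem_toFinset] at hω
    have hX : a ≤ (X C ω : ℝ) := hω
    have h3 : (1:ℝ) ≤ Real.exp t ^ (X C ω) * Real.exp (-(a*t)) := by
      rw [← Real.exp_nat_mul, ← Real.exp_add, Real.one_le_exp_iff]
      nlinarith [hX, ht0]
    nlinarith [W_nonneg hp0 hp1 ω, h3]
  have step2 : ∑ ω ∈ ({ω : ι → Bool | a ≤ (X C ω : ℝ)}).toFinite.toFinset, W p ω
      ≤ ∑ ω : ι → Bool, (W p ω * Real.exp t ^ (X C ω)) * Real.exp (-(a*t)) := by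
    refine (Finset.sum_le_sum step1).trans ?_
    apply Finset.sum_le_sum_of_subset_of_nonneg (Finset.subset_univ _)
    intro ω _ _
    have := W_nonneg hp0 hp1 ω
    positivity
  refine step2.trans ?_
  rw [← Finset.sum_mul, sum_W_exp, het]
  have hbase : (0:ℝ) ≤ 1 - p + p * (1+ε) := by nlinarith
  have hpow : (1 - p + p * (1+ε)) ^ C.card ≤ Real.exp (p * ε * c) := by
    have h1 : 1 - p + p * (1+ε) ≤ Real.exp (p * ε) := by
      have := Real.add_one_le_exp (p * ε); linarith
    calc (1 - p + p * (1+ε)) ^ C.card ≤ Real.exp (p * ε) ^ C.card :=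
          pow_le_pow_left₀ hbase h1 _
      _ = Real.exp (p * ε * c) := by
          rw [← Real.exp_nat_mul]; congr 1; rw [hc]; ring
  have hexp : Real.exp (p * ε * c) * Real.exp (-(a*t)) ≤ Real.exp (-(ε^2 * p * c)/3) := by
    rw [← Real.exp_add, Real.exp_le_exp]
    have hkey := key_ineq hε0.le hε1.le
    have hpc : (0:ℝ) ≤ p * c := mul_nonneg hp0 hc0
    rw [ha]
    nlinarith [mul_le_mul_of_nonneg_left hkey hpc]
  calc (1 - p + p * (1+ε)) ^ C.card * Real.exp (-(a*t))
      ≤ Real.exp (p * ε * c) * Real.exp (-(a*t)) := by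
        apply mul_le_mul_of_nonneg_right hpow (Real.exp_pos _).le
    _ ≤ _ := hexp

end Chernoff

lemma geom_aux (r : ℝ) (h0 : 0 ≤ r) (h3 : r ≤ 1/3) (M : ℕ) :
    ∑ j ∈ Finset.Icc 1 M, r^j ≤ (3/2) * r := by
  have main : ∀ M : ℕ, ∑ j ∈ Finset.Icc 1 M, r^j ≤ (3/2) * r * (1 - r^M) := by
    intro M
    induction M with
    | zero => simp
    | succ m ih =>
      rw [Finset.sum_Icc_succ_top (by omega : 1 ≤ m + 1)]
      have hrm : (0:ℝ) ≤ r^m := pow_nonneg h0 m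
      have hstep : r^(m+1) = r * r^m := by ring
      nlinarith [ih, hrm, mul_nonneg (mul_nonneg h0 hrm) (by linarith : (0:ℝ) ≤ 1/3 - r)]
  have := main M
  nlinarith [pow_nonneg h0 M]

/-- Let `G` be a finite connected simple graph on `n ≥ 3` vertices with
edge connectivity `λ ≥ 1`, let `1 ≤ k ≤ λ`, `ε ∈ (0,1)`, `τ ≥ 3`, and
`p = 3τ ln n/(ε²k) ≤ 1`. Assume Karger's cut-counting bound: for every `j ≥ 1`, the number
of distinct cuts `∂S` of cardinality at most `j·λ` is at most `n^{2j}`. If each edge of `G`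
is included independently with probability `p` (product Bernoulli measure over the edges),
then the probability that some cut `∂S` has at least `(1+ε)·p·|∂S|` sampled edges is at
most `n^{5−τ}`. -/
theorem sampled_cuts_concentrate {V : Type*} [Fintype V] [DecidableEq V]
    (G : SimpleGraph V) [DecidableRel G.Adj]
    (hn : 3 ≤ Fintype.card V) (hconn : G.Connected)
    (lam : ℕ)
    (hlam : lam = sInf {m : ℕ | ∃ S : Set V, S.Nonempty ∧ S ≠ Set.univ ∧
      m = (edgeCut G S).ncard})
    (hlam1 : 1 ≤ lam)
    (k : ℝ) (hk1 : 1 ≤ k) (hklam : k ≤ (lam : ℝ))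
    (ε : ℝ) (hε0 : 0 < ε) (hε1 : ε < 1)
    (τ : ℝ) (hτ : 3 ≤ τ)
    (p : ℝ) (hp : p = 3 * τ * Real.log (Fintype.card V) / (ε ^ 2 * k))
    (hp1 : p ≤ 1)
    (hcount : ∀ j : ℕ, 0 < j →
      {F : Set (Sym2 V) | ∃ S : Set V, S.Nonempty ∧ S ≠ Set.univ ∧ F = edgeCut G S ∧
        F.ncard ≤ j * lam}.ncard ≤ (Fintype.card V) ^ (2 * j)) :
    (Measure.pi fun _ : G.edgeFinset =>
        (PMF.bernoulli (Real.toNNReal p) (Real.toNNReal_le_one.mpr hp1)).toMeasure)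
      {ω : G.edgeFinset → Bool | ∃ S : Set V, S.Nonempty ∧ S ≠ Set.univ ∧
        (1 + ε) * p * ((edgeCut G S).ncard : ℝ) ≤
          (({e : G.edgeFinset | (e : Sym2 V) ∈ edgeCut G S ∧ ω e = true}).ncard : ℝ)}
      ≤ ENNReal.ofReal ((Fintype.card V : ℝ) ^ ((5 : ℝ) - τ)) := by
  classical
  have hnR3 : (3:ℝ) ≤ (Fintype.card V : ℝ) := by exact_mod_cast hn
  set nR : ℝ := (Fintype.card V : ℝ) with hnRdef
  have hnR1 : (1:ℝ) < nR := by linarith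
  have hnR0 : (0:ℝ) < nR := by linarith
  have hlogn : 0 < Real.log nR := Real.log_pos hnR1
  have hk0 : (0:ℝ) < k := by linarith
  have hp0 : 0 ≤ p := by
    rw [hp]
    apply div_nonneg (by nlinarith [hlogn.le]) (by positivity)
  set 𝒞 : Set (Set (Sym2 V)) :=
    {F | ∃ S : Set V, S.Nonempty ∧ S ≠ Set.univ ∧ F = edgeCut G S} with h𝒞
  have h𝒞fin : 𝒞.Finite := Set.toFinite _
  have hlam_le : ∀ F ∈ 𝒞, lam ≤ F.ncard := by
    rintro F ⟨S, hS1, hS2, rfl⟩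
    rw [hlam]; exact Nat.sInf_le ⟨S, hS1, hS2, rfl⟩
  have hFsub : ∀ F ∈ 𝒞, F ⊆ G.edgeSet := by
    rintro F ⟨S, _, _, rfl⟩ e he; exact he.1
  set CF : Set (Sym2 V) → Finset G.edgeFinset :=
    fun F => Finset.univ.filter (fun e => (e : Sym2 V) ∈ F) with hCF
  have hcard : ∀ F ∈ 𝒞, (CF F).card = F.ncard := by
    intro F hF
    have hsubF : F ⊆ ↑G.edgeFinset := by
      intro e he
      simpa [SimpleGraph.mem_edgeFinset] using hFsub F hF he
    have h1 : ((Subtype.val : G.edgeFinset → Sym2 V) ''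
          ((Subtype.val : G.edgeFinset → Sym2 V) ⁻¹' F)) = F := by
      rw [Set.image_preimage_eq_inter_range, Subtype.range_val]
      exact Set.inter_eq_self_of_subset_left hsubF
    have h2 : ((CF F : Finset G.edgeFinset) : Set G.edgeFinset)
        = (Subtype.val : G.edgeFinset → Sym2 V) ⁻¹' F := by
      ext e; simp [hCF]
    calc (CF F).card = ((CF F : Finset G.edgeFinset) : Set G.edgeFinset).ncard :=
          (Set.ncard_coe_finset _).symm
      _ = ((Subtype.val : G.edgeFinset → Sym2 V) ⁻¹' F).ncard := by rw [h2]
      _ = ((Subtype.val : G.edgeFinset → Sym2 V) ''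
            ((Subtype.val : G.edgeFinset → Sym2 V) ⁻¹' F)).ncard :=
          (Set.ncard_image_of_injective _ Subtype.val_injective).symm
      _ = F.ncard := by rw [h1]
  have hXeq : ∀ (F : Set (Sym2 V)) (ω : G.edgeFinset → Bool),
      ({e : G.edgeFinset | (e : Sym2 V) ∈ F ∧ ω e = true}).ncard = X (CF F) ω := by
    intro F ω
    have h3 : {e : G.edgeFinset | (e : Sym2 V) ∈ F ∧ ω e = true}
        = ↑((CF F).filter (fun e => ω e = true)) := by
      ext e; simp [hCF]
    rw [h3, Set.ncard_coe_finset, X]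
  -- union bound
  have hsub_event : {ω : G.edgeFinset → Bool | ∃ S : Set V, S.Nonempty ∧ S ≠ Set.univ ∧
        (1 + ε) * p * ((edgeCut G S).ncard : ℝ) ≤
          (({e : G.edgeFinset | (e : Sym2 V) ∈ edgeCut G S ∧ ω e = true}).ncard : ℝ)}
      ⊆ ⋃ F ∈ h𝒞fin.toFinset,
          {ω : G.edgeFinset → Bool | (1+ε) * p * ((CF F).card : ℝ) ≤ (X (CF F) ω : ℝ)} := by
    rintro ω ⟨S, hS1, hS2, hineq⟩
    have hFmem : edgeCut G S ∈ 𝒞 := ⟨S, hS1, hS2, rfl⟩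
    apply Set.mem_biUnion (Set.Finite.mem_toFinset h𝒞fin |>.mpr hFmem)
    have e1 : (((CF (edgeCut G S)).card : ℕ) : ℝ) = ((edgeCut G S).ncard : ℝ) := by
      exact_mod_cast congrArg Nat.cast (hcard _ hFmem)
    have e2 : ((X (CF (edgeCut G S)) ω : ℕ) : ℝ)
        = (({e : G.edgeFinset | (e : Sym2 V) ∈ edgeCut G S ∧ ω e = true}).ncard : ℝ) := by
      exact_mod_cast congrArg Nat.cast (hXeq (edgeCut G S) ω).symm
    show (1+ε) * p * ((CF (edgeCut G S)).card : ℝ) ≤ (X (CF (edgeCut G S)) ω : ℝ)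
    rw [e1, e2]; exact hineq
  refine le_trans (measure_mono hsub_event) ?_
  refine le_trans (measure_biUnion_finset_le _ _) ?_
  have hcher : ∀ F ∈ h𝒞fin.toFinset,
      (Measure.pi fun _ : G.edgeFinset =>
        (PMF.bernoulli (Real.toNNReal p) (Real.toNNReal_le_one.mpr hp1)).toMeasure)
        {ω : G.edgeFinset → Bool | (1+ε) * p * ((CF F).card : ℝ) ≤ (X (CF F) ω : ℝ)}
      ≤ ENNReal.ofReal (Real.exp (-(ε^2 * p * ((CF F).card : ℝ)) / 3)) :=
    fun F _ => chernoff hp0 hp1 hε0 hε1 (CF F)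
  refine le_trans (Finset.sum_le_sum hcher) ?_
  rw [← ENNReal.ofReal_sum_of_nonneg (fun F _ => (Real.exp_pos _).le)]
  apply ENNReal.ofReal_le_ofReal
  -- real estimate
  set M : ℕ := Fintype.card (Sym2 V) with hM
  set g : Set (Sym2 V) → ℕ := fun F => F.ncard / lam with hg
  have hlam0 : 0 < lam := hlam1
  have hterm : ∀ F ∈ h𝒞fin.toFinset,
      Real.exp (-(ε^2 * p * ((CF F).card : ℝ)) / 3) ≤ nR ^ (-(τ * (g F : ℝ))) := by
    intro F hF
    rw [Set.Finite.mem_toFinset] at hF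
    rw [hcard F hF]
    have hcl : (lam:ℝ) ≤ (F.ncard : ℝ) := by exact_mod_cast hlam_le F hF
    have hgc : (g F : ℝ) * (lam:ℝ) ≤ (F.ncard : ℝ) := by
      exact_mod_cast Nat.div_mul_le_self F.ncard lam
    have hexp_eq : Real.exp (-(ε^2 * p * (F.ncard : ℝ)) / 3)
        = nR ^ (-(τ * (F.ncard : ℝ) / k)) := by
      rw [Real.rpow_def_of_pos hnR0]
      congr 1
      rw [hp]
      field_simp
    rw [hexp_eq]
    apply Real.rpow_le_rpow_of_exponent_le hnR1.le
    have hg0 : (0:ℝ) ≤ (g F : ℝ) := Nat.cast_nonneg _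
    have h4 : (g F : ℝ) * k ≤ (F.ncard : ℝ) := by nlinarith
    have h5 : (g F : ℝ) ≤ (F.ncard : ℝ) / k := by rw [le_div_iff₀ hk0]; exact h4
    have hτ0 : (0:ℝ) ≤ τ := by linarith
    rw [neg_le_neg_iff, mul_div_assoc]
    exact mul_le_mul_of_nonneg_left h5 hτ0
  refine le_trans (Finset.sum_le_sum hterm) ?_
  have hmaps : ∀ F ∈ h𝒞fin.toFinset, g F ∈ Finset.Icc 1 M := by
    intro F hF
    rw [Set.Finite.mem_toFinset] at hF
    rw [Finset.mem_Icc]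
    constructor
    · rw [hg]; exact (Nat.one_le_div_iff hlam0).mpr (hlam_le F hF)
    · calc g F ≤ F.ncard := Nat.div_le_self _ _
        _ ≤ M := by
          rw [hM, ← Nat.card_eq_fintype_card, ← Set.ncard_univ]
          exact Set.ncard_le_ncard (Set.subset_univ F) (Set.toFinite _)
  rw [← Finset.sum_fiberwise_of_maps_to hmaps (fun F => nR ^ (-(τ * (g F : ℝ))))]
  have hinner : ∀ j ∈ Finset.Icc 1 M,
      (∑ F ∈ h𝒞fin.toFinset.filter (fun F => g F = j), nR ^ (-(τ * (g F : ℝ))))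
        ≤ nR ^ 2 * (nR ^ ((2:ℝ) - τ)) ^ j := by
    intro j hj
    rw [Finset.mem_Icc] at hj
    have hsum_eq : (∑ F ∈ h𝒞fin.toFinset.filter (fun F => g F = j), nR ^ (-(τ * (g F : ℝ))))
        = (h𝒞fin.toFinset.filter (fun F => g F = j)).card * nR ^ (-(τ * (j : ℝ))) := by
      calc (∑ F ∈ h𝒞fin.toFinset.filter (fun F => g F = j), nR ^ (-(τ * (g F : ℝ))))
          = ∑ F ∈ h𝒞fin.toFinset.filter (fun F => g F = j), nR ^ (-(τ * (j : ℝ))) :=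
            Finset.sum_congr rfl (fun F hF => by rw [(Finset.mem_filter.mp hF).2])
        _ = _ := by rw [Finset.sum_const, nsmul_eq_mul]
    rw [hsum_eq]
    have hfibcard : (h𝒞fin.toFinset.filter (fun F => g F = j)).card
        ≤ (Fintype.card V) ^ (2 * (j+1)) := by
      have hsub2 : ((h𝒞fin.toFinset.filter (fun F => g F = j)) : Set (Set (Sym2 V)))
          ⊆ {F : Set (Sym2 V) | ∃ S : Set V, S.Nonempty ∧ S ≠ Set.univ ∧ F = edgeCut G S ∧
              F.ncard ≤ (j+1) * lam} := by
        intro F hF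
        simp only [Finset.coe_filter, Set.mem_setOf_eq, Set.Finite.mem_toFinset] at hF
        obtain ⟨⟨S, h1, h2, rfl⟩, hgj⟩ := hF
        refine ⟨S, h1, h2, rfl, ?_⟩
        have : (edgeCut G S).ncard / lam < j + 1 := by rw [← hgj]; exact Nat.lt_succ_self _
        have := (Nat.div_lt_iff_lt_mul hlam0).mp this
        omega
      calc (h𝒞fin.toFinset.filter (fun F => g F = j)).card
          = ((h𝒞fin.toFinset.filter (fun F => g F = j)) : Set (Set (Sym2 V))).ncard :=
            (Set.ncard_coe_finset _).symm
        _ ≤ _ := Set.ncard_le_ncard hsub2 (Set.toFinite _)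
        _ ≤ (Fintype.card V) ^ (2 * (j+1)) := hcount (j+1) (by omega)
    have hrpow_pos : (0:ℝ) < nR ^ (-(τ * (j : ℝ))) := Real.rpow_pos_of_pos hnR0 _
    have hstep : ((h𝒞fin.toFinset.filter (fun F => g F = j)).card : ℝ) * nR ^ (-(τ * (j : ℝ)))
        ≤ (((Fintype.card V) ^ (2 * (j+1)) : ℕ) : ℝ) * nR ^ (-(τ * (j : ℝ))) := by
      apply mul_le_mul_of_nonneg_right _ hrpow_pos.le
      exact_mod_cast hfibcard
    refine hstep.trans ?_
    -- algebra: n^{2(j+1)} * n^{-τj} = n^2 * (n^{2-τ})^j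
    have halg : (((Fintype.card V) ^ (2 * (j+1)) : ℕ) : ℝ) * nR ^ (-(τ * (j : ℝ)))
        = nR ^ 2 * (nR ^ ((2:ℝ) - τ)) ^ j := by
      have h6 : (((Fintype.card V) ^ (2 * (j+1)) : ℕ) : ℝ) = nR ^ ((2 * (j+1) : ℕ) : ℝ) := by
        rw [Real.rpow_natCast]; push_cast; ring
      have h7 : (nR ^ ((2:ℝ) - τ)) ^ j = nR ^ (((2:ℝ) - τ) * (j:ℝ)) := by
        rw [← Real.rpow_natCast (nR ^ ((2:ℝ) - τ)) j, ← Real.rpow_mul hnR0.le]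
      have e3 : (nR ^ (2:ℕ) : ℝ) = nR ^ ((2:ℝ)) := by
        rw [← Real.rpow_natCast nR 2]; norm_num
      rw [h6, h7, ← Real.rpow_add hnR0, e3, ← Real.rpow_add hnR0]
      congr 1
      push_cast
      ring
    rw [halg]
  refine le_trans (Finset.sum_le_sum hinner) ?_
  rw [← Finset.mul_sum]
  set r : ℝ := nR ^ ((2:ℝ) - τ) with hr
  have hr0 : 0 ≤ r := (Real.rpow_pos_of_pos hnR0 _).le
  have hr3 : r ≤ 1/3 := by
    have h9 : r ≤ nR ^ (-(1:ℝ)) :=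
      Real.rpow_le_rpow_of_exponent_le hnR1.le (by linarith)
    rw [Real.rpow_neg_one] at h9
    have : nR⁻¹ ≤ 1/3 := by
      rw [inv_le_comm₀ hnR0 (by norm_num)]
      linarith
    linarith
  have hgeo := geom_aux r hr0 hr3 M
  calc nR ^ 2 * ∑ j ∈ Finset.Icc 1 M, r ^ j ≤ nR ^ 2 * ((3/2) * r) := by
        apply mul_le_mul_of_nonneg_left hgeo (by positivity)
    _ ≤ nR ^ ((5:ℝ) - τ) := by
        have e3 : (nR ^ (2:ℕ) : ℝ) = nR ^ ((2:ℝ)) := by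
          rw [← Real.rpow_natCast nR 2]; norm_num
        have h10 : nR ^ ((2:ℝ)) * ((3/2) * r) = (3/2) * nR ^ ((4:ℝ) - τ) := by
          rw [hr, show nR ^ ((2:ℝ)) * ((3/2) * nR ^ ((2:ℝ) - τ))
              = (3/2) * (nR ^ ((2:ℝ)) * nR ^ ((2:ℝ) - τ)) from by ring,
            ← Real.rpow_add hnR0]
          congr 1
          ring
        have h11 : nR ^ ((5:ℝ) - τ) = nR * nR ^ ((4:ℝ) - τ) := by
          rw [show ((5:ℝ) - τ) = 1 + ((4:ℝ) - τ) from by ring, Real.rpow_add hnR0,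
            Real.rpow_one]
        have hpos : 0 < nR ^ ((4:ℝ) - τ) := Real.rpow_pos_of_pos hnR0 _
        rw [e3, h10, h11]
        nlinarith [hpos]
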